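/- arXiv:1610.03705 — 2 statements merged into one kernel-verified Lean document; each statement's English description precedes it below -/
import Mathlib

section
/- For all integers m ≥ 1 and t ≥ 0, the number of vertices of the Koch network K_{m,t} equals 2(3m+1)^t + 1. -/
/-- The triangles of the Koch network `K_{m,t}`: at step `t+1`, each old triangle survives and
each (triangle, corner, group) creates a new triangle. -/
def KochTri (m : ℕ) : ℕ → Type
  | 0 => Unit
  | t+1 => KochTri m t ⊕ (KochTri m t × Fin 3 × Fin m)

/-- The vertices of the Koch network `K_{m,t}`: at step `t+1`, each (triangle, corner, group)
creates two new vertices. -/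
def KochVertex (m : ℕ) : ℕ → Type
  | 0 => Fin 3
  | t+1 => KochVertex m t ⊕ (KochTri m t × Fin 3 × Fin m × Fin 2)

/-- The three corner vertices of each triangle. -/
def KochCorner (m : ℕ) : ∀ t, KochTri m t → Fin 3 → KochVertex m t
  | 0, _, i => i
  | t+1, Sum.inl τ, i => Sum.inl (KochCorner m t τ i)
  | t+1, Sum.inr (τ, c, g), i =>
      ![Sum.inl (KochCorner m t τ c), Sum.inr (τ, c, g, 0), Sum.inr (τ, c, g, 1)] i

instance KochTri.instDecidableEq (m : ℕ) : ∀ t, DecidableEq (KochTri m t)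
  | 0 => inferInstanceAs (DecidableEq Unit)
  | t+1 =>
    letI := KochTri.instDecidableEq m t
    inferInstanceAs (DecidableEq (KochTri m t ⊕ (KochTri m t × Fin 3 × Fin m)))

instance KochVertex.instDecidableEq (m : ℕ) : ∀ t, DecidableEq (KochVertex m t)
  | 0 => inferInstanceAs (DecidableEq (Fin 3))
  | t+1 =>
    letI := KochVertex.instDecidableEq m t
    letI := KochTri.instDecidableEq m t
    inferInstanceAs (DecidableEq (KochVertex m t ⊕ (KochTri m t × Fin 3 × Fin m × Fin 2)))

instance KochTri.instFintype (m : ℕ) : ∀ t, Fintype (KochTri m t)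
  | 0 => inferInstanceAs (Fintype Unit)
  | t+1 =>
    letI := KochTri.instFintype m t
    inferInstanceAs (Fintype (KochTri m t ⊕ (KochTri m t × Fin 3 × Fin m)))

instance KochVertex.instFintype (m : ℕ) : ∀ t, Fintype (KochVertex m t)
  | 0 => inferInstanceAs (Fintype (Fin 3))
  | t+1 =>
    letI := KochVertex.instFintype m t
    letI := KochTri.instFintype m t
    inferInstanceAs (Fintype (KochVertex m t ⊕ (KochTri m t × Fin 3 × Fin m × Fin 2)))

/-- The Koch network `K_{m,t}`: two distinct vertices are adjacent iff they are corners of a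
common triangle. -/
def KochGraph (m t : ℕ) : SimpleGraph (KochVertex m t) where
  Adj u v := u ≠ v ∧ ∃ (τ : KochTri m t) (i j : Fin 3),
      KochCorner m t τ i = u ∧ KochCorner m t τ j = v
  symm := ⟨by rintro u v ⟨hne, τ, i, j, hi, hj⟩; exact ⟨hne.symm, τ, j, i, hj, hi⟩⟩
  loopless := ⟨by rintro u ⟨hne, -⟩; exact hne rfl⟩

instance (m t : ℕ) : DecidableRel (KochGraph m t).Adj := fun u v =>
  inferInstanceAs (Decidable (u ≠ v ∧ ∃ (τ : KochTri m t) (i j : Fin 3),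
      KochCorner m t τ i = u ∧ KochCorner m t τ j = v))

/-- The step at which a vertex of `K_{m,t}` was added (initial vertices are added at step 0). -/
def KochBirth (m : ℕ) : ∀ t, KochVertex m t → ℕ
  | 0, _ => 0
  | t+1, Sum.inl v => KochBirth m t v
  | t+1, Sum.inr _ => t+1

/-- The canonical inclusion of `K_{m,t}` into `K_{m,t+1}`. -/
def KochInl (m t : ℕ) (v : KochVertex m t) : KochVertex m (t+1) := Sum.inl v

/-- The other member of the group of two with which a (non-initial) vertex was added. -/
def KochSibling (m : ℕ) : ∀ t, KochVertex m t → KochVertex m t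
  | 0, v => v
  | t+1, Sum.inl v => Sum.inl (KochSibling m t v)
  | t+1, Sum.inr (τ, c, g, p) => Sum.inr (τ, c, g, if p = 0 then 1 else 0)

/-- The father vertex of a (non-initial) vertex: the existing vertex to which its group of two
was attached. -/
def KochFather (m : ℕ) : ∀ t, KochVertex m t → KochVertex m t
  | 0, v => v
  | t+1, Sum.inl v => Sum.inl (KochFather m t v)
  | t+1, Sum.inr (τ, c, _, _) => Sum.inl (KochCorner m t τ c)

/-- For all integers m ≥ 1 and t ≥ 0, the number of vertices of the Koch network
`K_{m,t}` equals `2(3m+1)^t + 1`. -/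
theorem koch_card_vertices (m t : ℕ) (hm : 1 ≤ m) :
    Fintype.card (KochVertex m t) = 2 * (3 * m + 1) ^ t + 1 := by
  induction t with
  | zero => exact Fintype.card_fin 3
  | succ t ih =>
    have htri : Fintype.card (KochTri m t) = (3 * m + 1) ^ t := by
      clear ih
      induction t with
      | zero => exact Fintype.card_unit
      | succ t ih =>
        show Fintype.card (KochTri m t ⊕ (KochTri m t × Fin 3 × Fin m)) = _
        simp [Fintype.card_sum, Fintype.card_prod, ih, pow_succ]
        ring
    show Fintype.card (KochVertex m t ⊕ (KochTri m t × Fin 3 × Fin m × Fin 2)) = _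
    simp [Fintype.card_sum, Fintype.card_prod, ih, htri, pow_succ]
    ring
end

section
/- For all integers m ≥ 1 and t ≥ 0, the number of triangles (sets of three mutually adjacent vertices) in the Koch network K_{m,t} equals (3m+1)^t. -/
attribute [reducible] KochTri KochVertex

lemma kv_inl_eq_inl {m t : ℕ} {u v : KochVertex m t} :
    @Eq (KochVertex m (t+1)) (Sum.inl u) (Sum.inl v) ↔ u = v :=
  ⟨fun h => by injection h, fun h => by rw [h]⟩

lemma kv_inl_eq_inr {m t : ℕ} {u : KochVertex m t}
    {x : KochTri m t × Fin 3 × Fin m × Fin 2} :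
    @Eq (KochVertex m (t+1)) (Sum.inl u) (Sum.inr x) ↔ False :=
  ⟨fun h => by injection h, False.elim⟩

lemma kv_inr_eq_inl {m t : ℕ} {u : KochVertex m t}
    {x : KochTri m t × Fin 3 × Fin m × Fin 2} :
    @Eq (KochVertex m (t+1)) (Sum.inr x) (Sum.inl u) ↔ False :=
  ⟨fun h => by injection h, False.elim⟩

lemma kv_inr_eq_inr {m t : ℕ} {x y : KochTri m t × Fin 3 × Fin m × Fin 2} :
    @Eq (KochVertex m (t+1)) (Sum.inr x) (Sum.inr y) ↔ x = y :=
  ⟨fun h => by injection h, fun h => by rw [h]⟩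

lemma fin2_zero_ne_one : (0 : Fin 2) ≠ 1 := by decide

lemma kochCorner_injective (m : ℕ) : ∀ t (τ : KochTri m t), Function.Injective (KochCorner m t τ)
  | 0, _ => fun i j h => h
  | t+1, Sum.inl τ => fun i j h =>
      kochCorner_injective m t τ (Sum.inl_injective h)
  | t+1, Sum.inr (τ, c, g) => by
      intro i j h
      fin_cases i <;> fin_cases j <;>
        simp_all [KochCorner, kv_inl_eq_inl, kv_inl_eq_inr, kv_inr_eq_inl, kv_inr_eq_inr,
          fin2_zero_ne_one, fin2_zero_ne_one.symm]

def kochTriSet (m t : ℕ) (τ : KochTri m t) : Finset (KochVertex m t) :=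
  Finset.image (KochCorner m t τ) Finset.univ

lemma mem_kochTriSet {m t : ℕ} {τ : KochTri m t} {v : KochVertex m t} :
    v ∈ kochTriSet m t τ ↔ ∃ i, KochCorner m t τ i = v := by
  simp [kochTriSet]

lemma card_kochTriSet (m t : ℕ) (τ : KochTri m t) : (kochTriSet m t τ).card = 3 := by
  rw [kochTriSet, Finset.card_image_of_injective _ (kochCorner_injective m t τ)]
  simp

lemma kochTriSet_inl (m t : ℕ) (τ : KochTri m t) :
    kochTriSet m (t+1) (Sum.inl τ) = (kochTriSet m t τ).image Sum.inl := by
  rw [kochTriSet, kochTriSet, Finset.image_image]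
  rfl

lemma kochTriSet_inr (m t : ℕ) (τ : KochTri m t) (c : Fin 3) (g : Fin m) :
    kochTriSet m (t+1) (Sum.inr (τ, c, g)) =
      {Sum.inl (KochCorner m t τ c), Sum.inr (τ, c, g, 0), Sum.inr (τ, c, g, 1)} := by
  ext v
  rw [mem_kochTriSet]
  simp only [Finset.mem_insert, Finset.mem_singleton]
  constructor
  · rintro ⟨i, rfl⟩
    fin_cases i <;> simp [KochCorner]
  · rintro (rfl | rfl | rfl)
    exacts [⟨0, rfl⟩, ⟨1, rfl⟩, ⟨2, rfl⟩]

lemma adj_inl_iff {m t : ℕ} {u v : KochVertex m t} :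
    (KochGraph m (t+1)).Adj (Sum.inl u) (Sum.inl v) ↔ (KochGraph m t).Adj u v := by
  constructor
  · rintro ⟨hne, (σ | ⟨σ, c, g⟩), i, j, hi, hj⟩
    · simp only [KochCorner] at hi hj
      exact ⟨fun h => hne (by rw [h]), σ, i, j, Sum.inl_injective hi, Sum.inl_injective hj⟩
    · exfalso
      fin_cases i <;> fin_cases j <;>
        simp_all [KochCorner, kv_inl_eq_inl, kv_inl_eq_inr, kv_inr_eq_inl, kv_inr_eq_inr]
  · rintro ⟨hne, σ, i, j, hi, hj⟩
    exact ⟨fun h => hne (Sum.inl_injective h), Sum.inl σ, i, j,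
      by simp [KochCorner, hi], by simp [KochCorner, hj]⟩

lemma adj_inr {m t : ℕ} {τ : KochTri m t} {c : Fin 3} {g : Fin m} {p : Fin 2}
    {w : KochVertex m (t+1)}
    (h : (KochGraph m (t+1)).Adj (Sum.inr (τ, c, g, p)) w) :
    w ∈ kochTriSet m (t+1) (Sum.inr (τ, c, g)) := by
  obtain ⟨hne, (σ | ⟨σ, c', g'⟩), i, j, hi, hj⟩ := h
  · simp [KochCorner, kv_inl_eq_inr] at hi
  · have hE : σ = τ ∧ c' = c ∧ g' = g := by
      fin_cases i <;>
        simp_all [KochCorner, kv_inl_eq_inl, kv_inl_eq_inr, kv_inr_eq_inl, kv_inr_eq_inr]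
    obtain ⟨rfl, rfl, rfl⟩ := hE
    exact mem_kochTriSet.mpr ⟨j, hj⟩

lemma kochTriSet_isNClique (m t : ℕ) (τ : KochTri m t) :
    (KochGraph m t).IsNClique 3 (kochTriSet m t τ) := by
  constructor
  · intro u hu v hv hne
    obtain ⟨i, rfl⟩ := mem_kochTriSet.mp hu
    obtain ⟨j, rfl⟩ := mem_kochTriSet.mp hv
    exact ⟨hne, τ, i, j, rfl, rfl⟩
  · exact card_kochTriSet m t τ

lemma kochTriSet_injective (m : ℕ) : ∀ t, Function.Injective (kochTriSet m t)
  | 0 => fun τ τ' _ => rfl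
  | t+1 => by
    rintro (τ | ⟨τ, c, g⟩) (τ' | ⟨τ', c', g'⟩) h
    · rw [kochTriSet_inl, kochTriSet_inl] at h
      exact congrArg Sum.inl
        (kochTriSet_injective m t (Finset.image_injective Sum.inl_injective h))
    · exfalso
      have hmem : (Sum.inr (τ', c', g', 0) : KochVertex m (t+1)) ∈
          kochTriSet m (t+1) (Sum.inl τ) := by
        rw [h, kochTriSet_inr]; simp
      rw [kochTriSet_inl] at hmem
      simp [kv_inr_eq_inl] at hmem
    · exfalso
      have hmem : (Sum.inr (τ, c, g, 0) : KochVertex m (t+1)) ∈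
          kochTriSet m (t+1) (Sum.inl τ') := by
        rw [← h, kochTriSet_inr]; simp
      rw [kochTriSet_inl] at hmem
      simp [kv_inr_eq_inl] at hmem
    · have hmem : (Sum.inr (τ, c, g, 0) : KochVertex m (t+1)) ∈
          kochTriSet m (t+1) (Sum.inr (τ', c', g')) := by
        rw [← h, kochTriSet_inr]; simp
      rw [kochTriSet_inr] at hmem
      simp [kv_inr_eq_inl, kv_inr_eq_inr, fin2_zero_ne_one] at hmem
      obtain ⟨rfl, rfl, rfl⟩ := hmem
      rfl

lemma clique_of_inr_mem {m t : ℕ} {s : Finset (KochVertex m (t+1))}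
    (hs : (KochGraph m (t+1)).IsNClique 3 s) {τ : KochTri m t} {c : Fin 3} {g : Fin m}
    {p : Fin 2} (hmem : Sum.inr (τ, c, g, p) ∈ s) :
    s = kochTriSet m (t+1) (Sum.inr (τ, c, g)) := by
  apply Finset.eq_of_subset_of_card_le ?_ (by rw [card_kochTriSet, hs.card_eq])
  intro w hw
  by_cases hwe : w = Sum.inr (τ, c, g, p)
  · subst hwe; rw [kochTriSet_inr]; fin_cases p <;> simp
  · exact adj_inr (hs.1 hmem hw (fun h => hwe h.symm))

lemma exists_kochTriSet (m : ℕ) : ∀ t (s : Finset (KochVertex m t)),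
    (KochGraph m t).IsNClique 3 s → ∃ τ, s = kochTriSet m t τ
  | 0, s, hs => ⟨(), Finset.eq_of_subset_of_card_le
      (fun v _ => mem_kochTriSet.mpr ⟨v, rfl⟩)
      (by rw [card_kochTriSet, hs.card_eq])⟩
  | t+1, s, hs => by
    by_cases hnew : ∃ τ c g p, Sum.inr (τ, c, g, p) ∈ s
    · obtain ⟨τ, c, g, p, hmem⟩ := hnew
      exact ⟨Sum.inr (τ, c, g), clique_of_inr_mem hs hmem⟩
    · push_neg at hnew
      have hall : ∀ w ∈ s, ∃ u, w = Sum.inl u := by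
        intro w hw
        match w with
        | Sum.inl u => exact ⟨u, rfl⟩
        | Sum.inr (τ, c, g, p) => exact absurd hw (hnew τ c g p)
      set s' := s.preimage Sum.inl (Set.injOn_of_injective Sum.inl_injective) with hs'
      have himg : s'.image Sum.inl = s := by
        ext w
        simp only [Finset.mem_image, Finset.mem_preimage, hs']
        constructor
        · rintro ⟨u, hu, rfl⟩; exact hu
        · intro hw; obtain ⟨u, rfl⟩ := hall w hw; exact ⟨u, hw, rfl⟩
      have hclique' : (KochGraph m t).IsNClique 3 s' := by
        constructor
        · intro u hu v hv hne
          have hu' : Sum.inl u ∈ s := Finset.mem_preimage.mp hu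
          have hv' : Sum.inl v ∈ s := Finset.mem_preimage.mp hv
          exact adj_inl_iff.mp (hs.1 hu' hv' (fun h => hne (Sum.inl_injective h)))
        · have h3 := hs.card_eq
          rw [← himg, Finset.card_image_of_injective _ Sum.inl_injective] at h3
          exact h3
      obtain ⟨τ, hτ⟩ := exists_kochTriSet m t s' hclique'
      exact ⟨Sum.inl τ, by rw [← himg, hτ, kochTriSet_inl]⟩

lemma card_kochTri (m : ℕ) : ∀ t, Fintype.card (KochTri m t) = (3 * m + 1) ^ t
  | 0 => rfl
  | t+1 => by
    have h := card_kochTri m t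
    show Fintype.card (KochTri m t ⊕ (KochTri m t × Fin 3 × Fin m)) = _
    rw [Fintype.card_sum, Fintype.card_prod, Fintype.card_prod, Fintype.card_fin,
      Fintype.card_fin, h, pow_succ]
    ring

/-- For all integers m ≥ 1 and t ≥ 0, the number of triangles (sets of three
mutually adjacent vertices, i.e. 3-cliques) in the Koch network `K_{m,t}` equals `(3m+1)^t`. -/
theorem koch_card_triangles (m t : ℕ) (hm : 1 ≤ m) :
    ((KochGraph m t).cliqueFinset 3).card = (3 * m + 1) ^ t := by
  have hset : (KochGraph m t).cliqueFinset 3 = Finset.image (kochTriSet m t) Finset.univ := by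
    ext s
    simp only [SimpleGraph.mem_cliqueFinset_iff, Finset.mem_image, Finset.mem_univ, true_and]
    constructor
    · intro hs
      obtain ⟨τ, hτ⟩ := exists_kochTriSet m t s hs
      exact ⟨τ, hτ.symm⟩
    · rintro ⟨τ, rfl⟩
      exact kochTriSet_isNClique m t τ
  rw [hset, Finset.card_image_of_injective _ (kochTriSet_injective m t), Finset.card_univ,
    card_kochTri]
end
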